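/- In a Heyting algebra satisfying prelinearity ((a ⇨ b) ⊔ (b ⇨ a) = ⊤ for all a, b), for all γ₁, γ₂, δ we have ((γ₁ ⊓ γ₂) ⇨ δ) ≤ (γ₁ ⇨ δ) ⊔ (γ₂ ⇨ δ). -/
import Mathlib

/-- In a Heyting algebra satisfying prelinearity, the generalised De Morgan
law `((γ₁ ⊓ γ₂) ⇨ δ) ≤ (γ₁ ⇨ δ) ⊔ (γ₂ ⇨ δ)` holds. -/
theorem prelinear_inf_himp_le {H : Type*} [HeytingAlgebra H]
    (hpre : ∀ a b : H, (a ⇨ b) ⊔ (b ⇨ a) = ⊤) (γ₁ γ₂ δ : H) :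
    ((γ₁ ⊓ γ₂) ⇨ δ) ≤ (γ₁ ⇨ δ) ⊔ (γ₂ ⇨ δ) := by
  have h1 : ((γ₁ ⊓ γ₂) ⇨ δ) ⊓ (γ₁ ⇨ γ₂) ≤ γ₁ ⇨ δ := by
    rw [le_himp_iff]
    calc ((γ₁ ⊓ γ₂) ⇨ δ) ⊓ (γ₁ ⇨ γ₂) ⊓ γ₁
        ≤ ((γ₁ ⊓ γ₂) ⇨ δ) ⊓ (γ₁ ⊓ γ₂) := by
          rw [inf_assoc]
          exact inf_le_inf_left _ (le_inf inf_le_right himp_inf_le)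
      _ ≤ δ := by rw [inf_comm]; exact inf_himp_le
  have h2 : ((γ₁ ⊓ γ₂) ⇨ δ) ⊓ (γ₂ ⇨ γ₁) ≤ γ₂ ⇨ δ := by
    rw [le_himp_iff]
    calc ((γ₁ ⊓ γ₂) ⇨ δ) ⊓ (γ₂ ⇨ γ₁) ⊓ γ₂
        ≤ ((γ₁ ⊓ γ₂) ⇨ δ) ⊓ (γ₁ ⊓ γ₂) := by
          rw [inf_assoc]
          refine inf_le_inf_left _ ?_
          exact le_inf (by rw [inf_comm]; exact inf_himp_le) inf_le_right
      _ ≤ δ := by rw [inf_comm]; exact inf_himp_le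
  calc ((γ₁ ⊓ γ₂) ⇨ δ)
      = ((γ₁ ⊓ γ₂) ⇨ δ) ⊓ ((γ₁ ⇨ γ₂) ⊔ (γ₂ ⇨ γ₁)) := by rw [hpre, inf_top_eq]
    _ = ((γ₁ ⊓ γ₂) ⇨ δ) ⊓ (γ₁ ⇨ γ₂) ⊔ ((γ₁ ⊓ γ₂) ⇨ δ) ⊓ (γ₂ ⇨ γ₁) := inf_sup_left _ _ _
    _ ≤ (γ₁ ⇨ δ) ⊔ (γ₂ ⇨ δ) := sup_le_sup h1 h2
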